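/- Let S : ℝ → ℝ be continuous with S(0) = 0, of locally bounded variation, and with M(x) := sup_{y≤x} S(y) finite for all x. Suppose S has only finitely many local extrema in every compact set. Then the Pitman transform TS(x) = 2M(x) − S(x) − 2M(0) has the same total variation as S on every interval [u, v] with u ≤ 0 ≤ v: ∫_u^v |d(TS)| = ∫_u^v |dS|. -/

import Mathlib

noncomputable def pastMax (S : ℝ → ℝ) (x : ℝ) : ℝ := sSup (S '' Set.Iic x)

noncomputable def pitman (S : ℝ → ℝ) (x : ℝ) : ℝ :=
  2 * pastMax S x - S x - 2 * pastMax S 0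

open Set

lemma evar_congr_edist {f g : ℝ → ℝ} {s : Set ℝ}
    (h : ∀ x ∈ s, ∀ y ∈ s, edist (f x) (f y) = edist (g x) (g y)) :
    eVariationOn f s = eVariationOn g s := by
  unfold eVariationOn
  congr 1 with p : 1
  exact Finset.sum_congr rfl fun i _ =>
    h _ (p.2.2.2 (i + 1)) _ (p.2.2.2 i)

lemma pastMax_eq_max (S : ℝ → ℝ) (hS : Continuous S) (hB : ∀ x : ℝ, BddAbove (S '' Set.Iic x))
    {a x : ℝ} (hax : a ≤ x) :
    pastMax S x = max (pastMax S a) (sSup (S '' Icc a x)) := by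
  have h1 : Iic x = Iic a ∪ Icc a x := by
    ext y
    simp only [mem_Iic, mem_union, mem_Icc]
    constructor
    · intro hy
      rcases le_total y a with h | h
      · exact Or.inl h
      · exact Or.inr ⟨h, hy⟩
    · rintro (h | h)
      · exact h.trans hax
      · exact h.2
  have hBa := hB a
  have hBx := hB x
  have hBI : BddAbove (S '' Icc a x) := hBx.mono (image_mono (f := S) (Icc_subset_Iic_self))
  rw [pastMax, pastMax, h1, image_union,
    csSup_union hBa ⟨S a, mem_image_of_mem _ self_mem_Iic⟩ hBI
      ⟨S a, mem_image_of_mem _ (left_mem_Icc.mpr hax)⟩]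

lemma le_pastMax (S : ℝ → ℝ) (hB : ∀ x : ℝ, BddAbove (S '' Set.Iic x)) (x : ℝ) :
    S x ≤ pastMax S x :=
  le_csSup (hB x) (mem_image_of_mem _ self_mem_Iic)

/-- If pastMax is constant on `Icc a b`, variation of pitman equals that of S there. -/
lemma evar_of_const (S : ℝ → ℝ) {a b : ℝ}
    (h : ∀ x ∈ Icc a b, pastMax S x = pastMax S a) :
    eVariationOn (pitman S) (Icc a b) = eVariationOn S (Icc a b) := by
  apply evar_congr_edist
  intro x hx y hy
  simp only [pitman, h x hx, h y hy, edist_dist, Real.dist_eq]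
  congr 1
  rw [show 2 * pastMax S a - S x - 2 * pastMax S 0 -
      (2 * pastMax S a - S y - 2 * pastMax S 0) = -(S x - S y) by ring, abs_neg]

lemma evar_of_eq (S : ℝ → ℝ) {a b : ℝ}
    (h : ∀ x ∈ Icc a b, pastMax S x = S x) :
    eVariationOn (pitman S) (Icc a b) = eVariationOn S (Icc a b) := by
  apply evar_congr_edist
  intro x hx y hy
  simp only [pitman, h x hx, h y hy, edist_dist, Real.dist_eq]
  congr 1
  ring_nf

lemma evar_split (f : ℝ → ℝ) {a c b : ℝ} (hac : a ≤ c) (hcb : c ≤ b) :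
    eVariationOn f (Icc a b) = eVariationOn f (Icc a c) + eVariationOn f (Icc c b) := by
  have := eVariationOn.Icc_add_Icc f (s := Icc a b) hac hcb ⟨hac, hcb⟩
  rw [inter_eq_self_of_subset_right (Icc_subset_Icc le_rfl hcb),
    inter_eq_self_of_subset_right (Icc_subset_Icc hac le_rfl),
    inter_eq_self_of_subset_right (Icc_subset_Icc le_rfl le_rfl)] at this
  exact this.symm

/-- Equality on monotone/antitone pieces. -/
lemma evar_piece (S : ℝ → ℝ) (hS : Continuous S) (hB : ∀ x : ℝ, BddAbove (S '' Set.Iic x))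
    {a b : ℝ} (hab : a ≤ b)
    (hmono : MonotoneOn S (Icc a b) ∨ AntitoneOn S (Icc a b)) :
    eVariationOn (pitman S) (Icc a b) = eVariationOn S (Icc a b) := by
  rcases hmono with hm | hm
  · -- monotone case
    have key : ∀ x ∈ Icc a b, pastMax S x = max (pastMax S a) (S x) := by
      intro x hx
      rw [pastMax_eq_max S hS hB hx.1]
      have hsup : sSup (S '' Icc a x) = S x := IsGreatest.csSup_eq
        ⟨mem_image_of_mem _ (right_mem_Icc.mpr hx.1), by
          rintro _ ⟨y, hy, rfl⟩
          exact hm ⟨hy.1, hy.2.trans hx.2⟩ hx hy.2⟩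
      rw [hsup]
    rcases le_total (S b) (pastMax S a) with hle | hle
    · apply evar_of_const
      intro x hx
      rw [key x hx, max_eq_left ((hm ⟨hx.1, hx.2⟩ ⟨hab, le_rfl⟩ hx.2).trans hle)]
    · -- crossing point
      have hSa : S a ≤ pastMax S a := le_pastMax S hB a
      obtain ⟨c, hc, hSc⟩ : ∃ c ∈ Icc a b, S c = pastMax S a := by
        have := intermediate_value_Icc hab hS.continuousOn (a := a) (b := b)
        exact this ⟨hSa, hle⟩
      rw [evar_split (pitman S) hc.1 hc.2, evar_split S hc.1 hc.2]
      congr 1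
      · apply evar_of_const
        intro x hx
        rw [key x ⟨hx.1, hx.2.trans hc.2⟩,
          max_eq_left (by rw [← hSc]; exact hm ⟨hx.1, hx.2.trans hc.2⟩ hc hx.2)]
      · have h2 : ∀ x ∈ Icc c b, pastMax S x = S x := by
          intro x hx
          rw [key x ⟨hc.1.trans hx.1, hx.2⟩,
            max_eq_right (by rw [← hSc]; exact hm hc ⟨hc.1.trans hx.1, hx.2⟩ hx.1)]
        apply evar_of_eq S h2
  · -- antitone case: pastMax constant
    apply evar_of_const
    intro x hx
    rw [pastMax_eq_max S hS hB hx.1]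
    have : sSup (S '' Icc a x) = S a := by
      apply IsGreatest.csSup_eq
      refine ⟨mem_image_of_mem _ (left_mem_Icc.mpr hx.1), ?_⟩
      rintro _ ⟨y, hy, rfl⟩
      exact hm ⟨le_rfl, hab⟩ ⟨hy.1, hy.2.trans hx.2⟩ hy.1
    rw [this, max_eq_left (le_pastMax S hB a)]

lemma no_extr_mono (S : ℝ → ℝ) (hS : Continuous S) {a b : ℝ} (hab : a ≤ b)
    (h : ∀ x ∈ Ioo a b, ¬ IsLocalExtr S x) :
    MonotoneOn S (Icc a b) ∨ AntitoneOn S (Icc a b) := by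
  have hinj : InjOn S (Icc a b) := by
    intro x hx y hy hxy
    by_contra hne
    rcases lt_or_gt_of_ne hne with hlt | hlt
    · obtain ⟨c, hc, hext⟩ := exists_isLocalExtr_Ioo hlt (hS.continuousOn) hxy
      exact h c ⟨hx.1.trans_lt hc.1, hc.2.trans_le hy.2⟩ hext
    · obtain ⟨c, hc, hext⟩ := exists_isLocalExtr_Ioo hlt (hS.continuousOn) hxy.symm
      exact h c ⟨hy.1.trans_lt hc.1, hc.2.trans_le hx.2⟩ hext
  rcases ContinuousOn.strictMonoOn_of_injOn_Icc' hab hS.continuousOn hinj with h | h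
  · exact Or.inl h.monotoneOn
  · exact Or.inr h.antitoneOn

theorem pitman_preserves_variation (S : ℝ → ℝ) (hS : Continuous S) (h0 : S 0 = 0)
    (hB : ∀ x : ℝ, BddAbove (S '' Set.Iic x))
    (hBV : LocallyBoundedVariationOn S Set.univ)
    (hext : ∀ u v : ℝ, {x | x ∈ Set.Icc u v ∧ IsLocalExtr S x}.Finite) :
    ∀ u v : ℝ, u ≤ 0 → 0 ≤ v →
      eVariationOn (pitman S) (Set.Icc u v) = eVariationOn S (Set.Icc u v) := by
  -- main claim by strong induction on the number of interior local extrema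
  suffices H : ∀ n : ℕ, ∀ u v : ℝ, u ≤ v →
      {x | x ∈ Ioo u v ∧ IsLocalExtr S x}.ncard ≤ n →
      eVariationOn (pitman S) (Set.Icc u v) = eVariationOn S (Set.Icc u v) by
    intro u v hu hv
    have huv : u ≤ v := hu.trans hv
    have hfin : {x | x ∈ Ioo u v ∧ IsLocalExtr S x}.Finite :=
      (hext u v).subset (fun x hx => ⟨⟨hx.1.1.le, hx.1.2.le⟩, hx.2⟩)
    exact H _ u v huv le_rfl
  intro n
  induction n with
  | zero =>
    intro u v huv hcard
    have hfin : {x | x ∈ Ioo u v ∧ IsLocalExtr S x}.Finite :=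
      (hext u v).subset (fun x hx => ⟨⟨hx.1.1.le, hx.1.2.le⟩, hx.2⟩)
    have hempty : ∀ x ∈ Ioo u v, ¬ IsLocalExtr S x := by
      intro x hx hex
      have : {x | x ∈ Ioo u v ∧ IsLocalExtr S x}.ncard = 0 := le_antisymm hcard (Nat.zero_le _)
      rw [Set.ncard_eq_zero hfin] at this
      exact absurd this (Set.nonempty_iff_ne_empty.mp ⟨x, hx, hex⟩)
    exact evar_piece S hS hB huv (no_extr_mono S hS huv hempty)
  | succ n ih =>
    intro u v huv hcard
    have hfin : {x | x ∈ Ioo u v ∧ IsLocalExtr S x}.Finite :=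
      (hext u v).subset (fun x hx => ⟨⟨hx.1.1.le, hx.1.2.le⟩, hx.2⟩)
    by_cases hne : {x | x ∈ Ioo u v ∧ IsLocalExtr S x}.Nonempty
    · obtain ⟨c, hc, hcext⟩ := hne
      have hsub1 : {x | x ∈ Ioo u c ∧ IsLocalExtr S x} ⊆
          {x | x ∈ Ioo u v ∧ IsLocalExtr S x} \ {c} := by
        rintro x ⟨hx, hex⟩
        exact ⟨⟨⟨hx.1, hx.2.trans hc.2⟩, hex⟩, fun h => absurd (h ▸ hx.2) (lt_irrefl c)⟩
      have hsub2 : {x | x ∈ Ioo c v ∧ IsLocalExtr S x} ⊆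
          {x | x ∈ Ioo u v ∧ IsLocalExtr S x} \ {c} := by
        rintro x ⟨hx, hex⟩
        exact ⟨⟨⟨hc.1.trans hx.1, hx.2⟩, hex⟩, fun h => absurd (h ▸ hx.1) (lt_irrefl c)⟩
      have hdcard : ({x | x ∈ Ioo u v ∧ IsLocalExtr S x} \ {c}).ncard ≤ n := by
        have := Set.ncard_diff_singleton_lt_of_mem
          (s := {x | x ∈ Ioo u v ∧ IsLocalExtr S x}) (a := c) ⟨hc, hcext⟩ hfin
        omega
      have h1 := ih u c hc.1.le
        (le_trans (Set.ncard_le_ncard hsub1 (hfin.diff)) hdcard)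
      have h2 := ih c v hc.2.le
        (le_trans (Set.ncard_le_ncard hsub2 (hfin.diff)) hdcard)
      rw [evar_split (pitman S) hc.1.le hc.2.le, evar_split S hc.1.le hc.2.le, h1, h2]
    · have hempty : ∀ x ∈ Ioo u v, ¬ IsLocalExtr S x := by
        intro x hx hex; exact hne ⟨x, hx, hex⟩
      exact evar_piece S hS hB huv (no_extr_mono S hS huv hempty)
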